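/- arXiv:2403.16585 — 2 statements merged into one kernel-verified Lean document; each statement's English description precedes it below -/
import Mathlib

section
/- Define $K(\mathscr{S}) = \bar{Q}^{1/2}\Phi\bar{B}S(\mathscr{S})^{\top}S(\mathscr{S})\bar{R}^{-1}S(\mathscr{S})^{\top}S(\mathscr{S})\bar{B}^{\top}\Phi^{\top}\bar{Q}^{1/2}$ where $S(\mathscr{S})$ is the selection matrix of $\mathscr{S}\subseteq\{0,\ldots,N-1\}$ and $\bar{R}$ is block diagonal positive definite. Then for any $\mathscr{S}$ and any $\omega\notin\mathscr{S}$, $K(\mathscr{S}\cup\{\omega\}) = K(\mathscr{S}) + K(\{\omega\})$; more generally $K(\mathscr{S}) = \sum_{\omega\in\mathscr{S}} K(\{\omega\})$. -/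
open Matrix
open scoped Kronecker

/-- The row-selection matrix of a subset `𝒮 ⊆ {0,…,N-1}`. -/
noncomputable def selMat {N : ℕ} (𝒮 : Finset (Fin N)) :
    Matrix (Fin 𝒮.card) (Fin N) ℝ :=
  fun i j => if j = (𝒮.orderIsoOfFin rfl i : Fin N) then 1 else 0

/-- `S(𝒮) = S̃(𝒮) ⊗ I_m`. -/
noncomputable def selKron {N m : ℕ} (𝒮 : Finset (Fin N)) :
    Matrix (Fin 𝒮.card × Fin m) (Fin N × Fin m) ℝ :=
  selMat 𝒮 ⊗ₖ (1 : Matrix (Fin m) (Fin m) ℝ)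

/-- `K(𝒮) = Q̄^{1/2} Φ B̄ Sᵀ S R̄⁻¹ Sᵀ S B̄ᵀ Φᵀ Q̄^{1/2}`. -/
noncomputable def Kmat {N m d : ℕ}
    (Qhalf Φ : Matrix (Fin d) (Fin d) ℝ)
    (Bbar : Matrix (Fin d) (Fin N × Fin m) ℝ)
    (Rbarinv : Matrix (Fin N × Fin m) (Fin N × Fin m) ℝ)
    (𝒮 : Finset (Fin N)) : Matrix (Fin d) (Fin d) ℝ :=
  let P : Matrix (Fin N × Fin m) (Fin N × Fin m) ℝ :=
    (selKron (m := m) 𝒮)ᵀ * selKron 𝒮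
  let G : Matrix (Fin d) (Fin N × Fin m) ℝ := Qhalf * Φ * Bbar
  G * (P * (Rbarinv * (P * Gᵀ)))

lemma sum_sel {N : ℕ} (𝒮 : Finset (Fin N)) (x y : Fin N) :
    (∑ i : Fin 𝒮.card, (if x = (𝒮.orderIsoOfFin rfl i : Fin N) then (1:ℝ) else 0) *
      (if y = (𝒮.orderIsoOfFin rfl i : Fin N) then (1:ℝ) else 0)) =
      if x = y ∧ x ∈ 𝒮 then 1 else 0 := by
  by_cases hx : x ∈ 𝒮
  · set g := 𝒮.orderIsoOfFin rfl with hg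
    set i0 := g.symm ⟨x, hx⟩ with hi0
    have hf : (g i0 : Fin N) = x := by simp [hi0]
    have key : ∀ i, (x = (g i : Fin N)) ↔ i = i0 := by
      intro i
      constructor
      · intro h
        have : g i = ⟨x, hx⟩ := Subtype.ext h.symm
        have := congrArg g.symm this
        simpa [hi0] using this
      · rintro rfl; exact hf.symm
    simp only [key]
    rw [Finset.sum_eq_single i0]
    · simp [hf, eq_comm, hx]
    · intro i _ hi; simp [hi]
    · intro h; exact absurd (Finset.mem_univ i0) h
  · have hne : ∀ i : Fin 𝒮.card, x ≠ 𝒮.orderEmbOfFin rfl i := by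
      intro i h
      exact hx (h ▸ 𝒮.orderEmbOfFin_mem rfl i)
    simp [hne, hx]

lemma P_diag {N m : ℕ} (𝒮 : Finset (Fin N)) :
    (selKron (m := m) 𝒮)ᵀ * selKron 𝒮 =
      Matrix.diagonal (fun a : Fin N × Fin m => if a.1 ∈ 𝒮 then (1:ℝ) else 0) := by
  ext a b
  erw [Matrix.mul_apply]
  simp only [transpose_apply, selKron, selMat, kroneckerMap_apply,
    Matrix.one_apply, Fintype.sum_prod_type, diagonal_apply]
  have step : ∀ i : Fin 𝒮.card,
      (∑ j : Fin m, ((if a.1 = (𝒮.orderIsoOfFin rfl i : Fin N) then (1:ℝ) else 0) * (if j = a.2 then 1 else 0)) *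
        ((if b.1 = (𝒮.orderIsoOfFin rfl i : Fin N) then (1:ℝ) else 0) * (if j = b.2 then 1 else 0)))
      = ((if a.1 = (𝒮.orderIsoOfFin rfl i : Fin N) then (1:ℝ) else 0) *
        (if b.1 = (𝒮.orderIsoOfFin rfl i : Fin N) then (1:ℝ) else 0)) * (if a.2 = b.2 then 1 else 0) := by
    intro i
    rw [show (∑ j : Fin m, ((if a.1 = (𝒮.orderIsoOfFin rfl i : Fin N) then (1:ℝ) else 0) * (if j = a.2 then 1 else 0)) *
        ((if b.1 = (𝒮.orderIsoOfFin rfl i : Fin N) then (1:ℝ) else 0) * (if j = b.2 then 1 else 0)))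
      = ((if a.1 = (𝒮.orderIsoOfFin rfl i : Fin N) then (1:ℝ) else 0) *
         (if b.1 = (𝒮.orderIsoOfFin rfl i : Fin N) then (1:ℝ) else 0)) *
        ∑ j : Fin m, (if j = a.2 then (1:ℝ) else 0) * (if j = b.2 then 1 else 0) from by
        rw [Finset.mul_sum]; congr 1; funext j; ring]
    congr 1
    simp [Finset.sum_ite_eq', Finset.mem_univ, ite_and, eq_comm]
  rw [Finset.sum_congr rfl (fun i _ => step i), ← Finset.sum_mul, sum_sel]
  by_cases h1 : a.1 = b.1 <;> by_cases h2 : a.2 = b.2 <;> by_cases hm : a.1 ∈ 𝒮 <;>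
    simp [h1, h2, hm, Prod.ext_iff]

noncomputable def Mfun {N m : ℕ} (R : Fin N → Matrix (Fin m) (Fin m) ℝ)
    (𝒮 : Finset (Fin N)) : Matrix (Fin N × Fin m) (Fin N × Fin m) ℝ :=
  Matrix.of fun a b => if a.1 = b.1 ∧ a.1 ∈ 𝒮 then (R a.1)⁻¹ a.2 b.2 else 0

lemma Kmat_eq {N m d : ℕ}
    (Qhalf Φ : Matrix (Fin d) (Fin d) ℝ)
    (Bbar : Matrix (Fin d) (Fin N × Fin m) ℝ)
    (R : Fin N → Matrix (Fin m) (Fin m) ℝ)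
    (Rbarinv : Matrix (Fin N × Fin m) (Fin N × Fin m) ℝ)
    (hRbarinv : ∀ a b, Rbarinv a b = if a.1 = b.1 then (R a.1)⁻¹ a.2 b.2 else 0)
    (𝒮 : Finset (Fin N)) :
    Kmat Qhalf Φ Bbar Rbarinv 𝒮 =
      (Qhalf * Φ * Bbar) * Mfun R 𝒮 * (Qhalf * Φ * Bbar)ᵀ := by
  unfold Kmat
  rw [P_diag]
  have hM : (Matrix.diagonal (fun a : Fin N × Fin m => if a.1 ∈ 𝒮 then (1:ℝ) else 0)) *
      Rbarinv * (Matrix.diagonal fun a : Fin N × Fin m => if a.1 ∈ 𝒮 then (1:ℝ) else 0)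
      = Mfun R 𝒮 := by
    ext a b
    rw [Matrix.mul_diagonal, Matrix.diagonal_mul, hRbarinv]
    by_cases h1 : a.1 = b.1
    · by_cases h2 : a.1 ∈ 𝒮 <;> simp [Mfun, h1, h2, h1 ▸ h2]
    · simp [Mfun, h1]
  rw [show ∀ (P M : Matrix (Fin N × Fin m) (Fin N × Fin m) ℝ)
        (G : Matrix (Fin d) (Fin N × Fin m) ℝ),
      G * (P * (M * (P * Gᵀ))) = G * (P * M * P) * Gᵀ from fun P M G => by
    simp only [Matrix.mul_assoc], hM]

lemma Mfun_insert {N m : ℕ} (R : Fin N → Matrix (Fin m) (Fin m) ℝ)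
    (𝒮 : Finset (Fin N)) (ω : Fin N) (hω : ω ∉ 𝒮) :
    Mfun R (insert ω 𝒮) = Mfun R 𝒮 + Mfun R {ω} := by
  ext a b
  simp only [Mfun, Matrix.of_apply, Matrix.add_apply, Finset.mem_insert, Finset.mem_singleton]
  by_cases h1 : a.1 = b.1
  · by_cases h2 : a.1 ∈ 𝒮 <;> by_cases h3 : a.1 = ω <;>
      simp_all
  · simp [h1]

theorem K_additive {N m d : ℕ}
    (Qhalf Φ : Matrix (Fin d) (Fin d) ℝ)
    (Bbar : Matrix (Fin d) (Fin N × Fin m) ℝ)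
    (R : Fin N → Matrix (Fin m) (Fin m) ℝ)
    (hR : ∀ k, (R k).PosDef)
    (Rbarinv : Matrix (Fin N × Fin m) (Fin N × Fin m) ℝ)
    (hRbarinv : ∀ a b, Rbarinv a b = if a.1 = b.1 then (R a.1)⁻¹ a.2 b.2 else 0) :
    (∀ (𝒮 : Finset (Fin N)) (ω : Fin N), ω ∉ 𝒮 →
        Kmat Qhalf Φ Bbar Rbarinv (insert ω 𝒮) =
          Kmat Qhalf Φ Bbar Rbarinv 𝒮 + Kmat Qhalf Φ Bbar Rbarinv {ω}) ∧
      (∀ 𝒮 : Finset (Fin N),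
        Kmat Qhalf Φ Bbar Rbarinv 𝒮 = ∑ ω ∈ 𝒮, Kmat Qhalf Φ Bbar Rbarinv {ω}) := by
  have hK := Kmat_eq Qhalf Φ Bbar R Rbarinv hRbarinv
  have h1 : ∀ (𝒮 : Finset (Fin N)) (ω : Fin N), ω ∉ 𝒮 →
      Kmat Qhalf Φ Bbar Rbarinv (insert ω 𝒮) =
        Kmat Qhalf Φ Bbar Rbarinv 𝒮 + Kmat Qhalf Φ Bbar Rbarinv {ω} := by
    intro 𝒮 ω hω
    rw [hK, hK, hK, Mfun_insert R 𝒮 ω hω, Matrix.mul_add, Matrix.add_mul]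
  refine ⟨h1, ?_⟩
  intro 𝒮
  induction 𝒮 using Finset.induction_on with
  | empty =>
    rw [hK]
    have : Mfun R (∅ : Finset (Fin N)) = 0 := by
      ext a b; simp [Mfun]
    simp [this]
  | @insert ω 𝒮 hω ih =>
    rw [h1 𝒮 ω hω, ih, Finset.sum_insert hω, add_comm]
end

section
/- Let $L\succeq 0$, $K(\mathscr{S})=\sum_{\omega\in\mathscr{S}}K(\{\omega\})$ with each $K(\{\omega\})\succeq 0$, and suppose $\max_{\omega\in\mathscr{T}}\operatorname{tr}[LK(\{\omega\})] > 0$. Define $f(\mathscr{S}) = \operatorname{tr}[L(I+K(\emptyset))^{-1}] - \operatorname{tr}[L(I+K(\mathscr{S}))^{-1}]$ and $\underline{\gamma} = \dfrac{\min_{\omega}\operatorname{tr}[LK(\{\omega\})]\ \{\min_{\omega}\lambda_{\min}[I+K(\{\omega\})]\}^2}{\max_{\omega}\operatorname{tr}[LK(\{\omega\})]\ \{\lambda_1[I+K(\mathscr{T})]\}^2}$. Then for all $\Omega,\mathscr{S}\subseteq\mathscr{T}$, $\sum_{\omega\in\Omega\setminus\mathscr{S}}\big(f(\mathscr{S}\cup\{\omega\})-f(\mathscr{S})\big)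 \geq \underline{\gamma}\,\big(f(\mathscr{S}\cup\Omega)-f(\mathscr{S})\big)$, i.e., the submodularity ratio of $f$ is at least $\underline{\gamma}$. -/
open Matrix

namespace SubmodAux


variable {n : Type*} [Fintype n] [DecidableEq n]

lemma psd_smul {M : Matrix n n ℝ} (hM : M.PosSemidef) {c : ℝ} (hc : 0 ≤ c) :
    (c • M).PosSemidef := by
  refine ⟨?_, fun x => ?_⟩
  · unfold Matrix.IsHermitian
    rw [conjTranspose_smul, hM.1.eq]
    simp
  · exact (hM.smul hc).2 x

lemma psd_trace_nonneg {M : Matrix n n ℝ} (hM : M.PosSemidef) : 0 ≤ M.trace := by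
  rw [Matrix.trace]
  refine Finset.sum_nonneg fun i _ => ?_
  exact hM.diag_nonneg

open scoped MatrixOrder in
lemma trace_mul_psd_nonneg {P Q : Matrix n n ℝ} (hP : P.PosSemidef) (hQ : Q.PosSemidef) :
    0 ≤ (P * Q).trace := by
  have h1 : P * Q = (P * (CFC.sqrt Q)) * (CFC.sqrt Q) := by rw [mul_assoc, CFC.sqrt_mul_sqrt_self Q hQ.nonneg]
  have h2 : ((P * (CFC.sqrt Q)) * (CFC.sqrt Q)).trace = ((CFC.sqrt Q) * P * (CFC.sqrt Q)).trace := by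
    rw [trace_mul_comm, mul_assoc]
  have h3 : ((CFC.sqrt Q) * P * (CFC.sqrt Q)).PosSemidef := by
    have := hP.mul_mul_conjTranspose_same (CFC.sqrt Q)
    rwa [(CFC.sqrt_nonneg Q).posSemidef.1.eq] at this
  rw [h1, h2]
  exact psd_trace_nonneg h3

lemma trace_mul_mono {L X Y : Matrix n n ℝ} (hL : L.PosSemidef)
    (h : (Y - X).PosSemidef) : (L * X).trace ≤ (L * Y).trace := by
  have := trace_mul_psd_nonneg hL h
  rw [mul_sub, trace_sub] at this
  linarith

lemma psd_sum {ι : Type*} {s : Finset ι} {g : ι → Matrix n n ℝ}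
    (h : ∀ i ∈ s, (g i).PosSemidef) : (∑ i ∈ s, g i).PosSemidef :=
  Finset.sum_induction g _ (fun _ _ ha hb => ha.add hb) Matrix.PosSemidef.zero h

section herm

variable {H : Matrix n n ℝ} (hH : H.IsHermitian)

local notation "V" => (Matrix.IsHermitian.eigenvectorUnitary hH : Matrix n n ℝ)

lemma V_mul_starV : V * star V = 1 :=
  Matrix.mem_unitaryGroup_iff.mp (Matrix.IsHermitian.eigenvectorUnitary hH).2

lemma starV_mul_V : star V * V = 1 :=
  Matrix.mem_unitaryGroup_iff'.mp (Matrix.IsHermitian.eigenvectorUnitary hH).2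

lemma conjd_psd (a : n → ℝ) (ha : ∀ i, 0 ≤ a i) :
    (V * diagonal a * star V).PosSemidef := by
  have h : (diagonal a).PosSemidef := Matrix.PosSemidef.diagonal (Pi.le_def.mpr (by simpa using ha))
  simpa [star_eq_conjTranspose] using h.mul_mul_conjTranspose_same V

lemma conjd_mul (a b : n → ℝ) :
    (V * diagonal a * star V) * (V * diagonal b * star V)
      = V * diagonal (fun i => a i * b i) * star V := by
  have : diagonal a * ((star V * V) * diagonal b) = diagonal (fun i => a i * b i) := by
    rw [starV_mul_V, one_mul, diagonal_mul_diagonal]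
  calc (V * diagonal a * star V) * (V * diagonal b * star V)
      = V * (diagonal a * ((star V * V) * diagonal b)) * star V := by
        simp only [Matrix.mul_assoc]
    _ = V * diagonal (fun i => a i * b i) * star V := by rw [this]

lemma conjd_one : V * diagonal (fun _ => (1:ℝ)) * star V = 1 := by
  have : diagonal (fun _ => (1:ℝ)) = (1 : Matrix n n ℝ) := diagonal_one
  rw [this, mul_one, V_mul_starV]

lemma conjd_add (a b : n → ℝ) :
    V * diagonal a * star V + V * diagonal b * star V
      = V * diagonal (fun i => a i + b i) * star V := by
  have : diagonal (fun i => a i + b i) = diagonal a + diagonal b := by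
    rw [← diagonal_add]
  rw [this, mul_add, add_mul]

lemma conjd_sub (a b : n → ℝ) :
    V * diagonal a * star V - V * diagonal b * star V
      = V * diagonal (fun i => a i - b i) * star V := by
  have : diagonal (fun i => a i - b i) = diagonal a - diagonal b := by
    rw [← diagonal_sub]
  rw [this, mul_sub, sub_mul]

lemma conjd_smul (c : ℝ) (a : n → ℝ) :
    c • (V * diagonal a * star V) = V * diagonal (fun i => c * a i) * star V := by
  have : diagonal (fun i => c * a i) = c • diagonal a := by
    rw [← diagonal_smul]; rfl
  rw [this]
  simp [Matrix.smul_mul, Matrix.mul_smul]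

lemma spectral_real : H = V * diagonal hH.eigenvalues * star V := by
  have := hH.spectral_theorem
  rw [Unitary.conjStarAlgAut_apply] at this
  rwa [show (RCLike.ofReal ∘ hH.eigenvalues : n → ℝ) = hH.eigenvalues by
    rw [RCLike.ofReal_real_eq_id]; rfl] at this

lemma smul_one_repr (c : ℝ) :
    c • (1 : Matrix n n ℝ) = V * diagonal (fun _ => c) * star V := by
  rw [← conjd_one hH, conjd_smul]
  simp

lemma sub_repr (c : ℝ) :
    c • (1 : Matrix n n ℝ) - H = V * diagonal (fun i => c - hH.eigenvalues i) * star V := by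
  rw [← conjd_sub hH, ← smul_one_repr hH, ← spectral_real hH]

lemma sub_repr' (c : ℝ) :
    H - c • (1 : Matrix n n ℝ) = V * diagonal (fun i => hH.eigenvalues i - c) * star V := by
  rw [← conjd_sub hH, ← smul_one_repr hH, ← spectral_real hH]

lemma psd_of_eig_le {c : ℝ} (h : ∀ i, hH.eigenvalues i ≤ c) :
    (c • (1 : Matrix n n ℝ) - H).PosSemidef := by
  rw [sub_repr hH]
  exact conjd_psd hH _ (fun i => by linarith [h i])

lemma psd_of_eig_ge {c : ℝ} (h : ∀ i, c ≤ hH.eigenvalues i) :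
    (H - c • (1 : Matrix n n ℝ)).PosSemidef := by
  rw [sub_repr' hH]
  exact conjd_psd hH _ (fun i => by linarith [h i])

lemma starV_X_V_repr (a : n → ℝ) :
    star V * (V * diagonal a * star V) * V = diagonal a := by
  calc star V * (V * diagonal a * star V) * V
      = (star V * V) * (diagonal a * (star V * V)) := by simp only [Matrix.mul_assoc]
    _ = diagonal a := by rw [starV_mul_V]; simp

lemma eig_le {c : ℝ} (h : (c • (1 : Matrix n n ℝ) - H).PosSemidef) :
    ∀ i, hH.eigenvalues i ≤ c := by
  rw [sub_repr hH] at h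
  have h2 := h.conjTranspose_mul_mul_same V
  rw [show (V)ᴴ = star V from rfl, starV_X_V_repr hH] at h2
  intro i
  have := posSemidef_diagonal_iff.mp h2 i
  linarith

lemma eig_ge {c : ℝ} (h : (H - c • (1 : Matrix n n ℝ)).PosSemidef) :
    ∀ i, c ≤ hH.eigenvalues i := by
  rw [sub_repr' hH] at h
  have h2 := h.conjTranspose_mul_mul_same V
  rw [show (V)ᴴ = star V from rfl, starV_X_V_repr hH] at h2
  intro i
  have := posSemidef_diagonal_iff.mp h2 i
  linarith

end herm

section gen

variable {W : Matrix n n ℝ} (hW1 : W * star W = 1) (hW2 : star W * W = 1)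

lemma gconj_psd (a : n → ℝ) (ha : ∀ i, 0 ≤ a i) :
    (W * diagonal a * star W).PosSemidef := by
  have h : (diagonal a).PosSemidef := Matrix.PosSemidef.diagonal (Pi.le_def.mpr (by simpa using ha))
  simpa [star_eq_conjTranspose] using h.mul_mul_conjTranspose_same W

include hW2 in
lemma gconj_mul (a b : n → ℝ) :
    (W * diagonal a * star W) * (W * diagonal b * star W)
      = W * diagonal (fun i => a i * b i) * star W := by
  have h : diagonal a * ((star W * W) * diagonal b) = diagonal (fun i => a i * b i) := by
    rw [hW2, one_mul, diagonal_mul_diagonal]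
  calc (W * diagonal a * star W) * (W * diagonal b * star W)
      = W * (diagonal a * ((star W * W) * diagonal b)) * star W := by
        simp only [Matrix.mul_assoc]
    _ = W * diagonal (fun i => a i * b i) * star W := by rw [h]

include hW1 in
lemma gconj_one : W * diagonal (fun _ => (1:ℝ)) * star W = 1 := by
  have h : diagonal (fun _ => (1:ℝ)) = (1 : Matrix n n ℝ) := diagonal_one
  rw [h, mul_one, hW1]

lemma gconj_add (a b : n → ℝ) :
    W * diagonal a * star W + W * diagonal b * star W
      = W * diagonal (fun i => a i + b i) * star W := by
  have h : diagonal (fun i => a i + b i) = diagonal a + diagonal b := by rw [← diagonal_add]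
  rw [h, mul_add, add_mul]

lemma gconj_sub (a b : n → ℝ) :
    W * diagonal a * star W - W * diagonal b * star W
      = W * diagonal (fun i => a i - b i) * star W := by
  have h : diagonal (fun i => a i - b i) = diagonal a - diagonal b := by rw [← diagonal_sub]
  rw [h, mul_sub, sub_mul]

lemma gconj_smul (c : ℝ) (a : n → ℝ) :
    c • (W * diagonal a * star W) = W * diagonal (fun i => c * a i) * star W := by
  have h : diagonal (fun i => c * a i) = c • diagonal a := by rw [← diagonal_smul]; rfl
  rw [h]
  simp [Matrix.smul_mul, Matrix.mul_smul]

include hW1 in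
lemma gsmul_one_repr (c : ℝ) :
    c • (1 : Matrix n n ℝ) = W * diagonal (fun _ => c) * star W := by
  rw [← gconj_one hW1, gconj_smul]
  simp

include hW2 in
lemma gstar_conj (a : n → ℝ) :
    star W * (W * diagonal a * star W) * W = diagonal a := by
  calc star W * (W * diagonal a * star W) * W
      = (star W * W) * (diagonal a * (star W * W)) := by simp only [Matrix.mul_assoc]
    _ = diagonal a := by rw [hW2]; simp

include hW1 hW2 in
lemma geig_le {a : n → ℝ} {c : ℝ}
    (h : (c • (1 : Matrix n n ℝ) - W * diagonal a * star W).PosSemidef) : ∀ i, a i ≤ c := by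
  rw [gsmul_one_repr hW1, gconj_sub] at h
  have h2 := h.conjTranspose_mul_mul_same W
  rw [show (W)ᴴ = star W from rfl, gstar_conj hW2] at h2
  intro i
  have := posSemidef_diagonal_iff.mp h2 i
  linarith

include hW1 hW2 in
lemma geig_ge {a : n → ℝ} {c : ℝ}
    (h : (W * diagonal a * star W - c • (1 : Matrix n n ℝ)).PosSemidef) : ∀ i, c ≤ a i := by
  rw [gsmul_one_repr hW1, gconj_sub] at h
  have h2 := h.conjTranspose_mul_mul_same W
  rw [show (W)ᴴ = star W from rfl, gstar_conj hW2] at h2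
  intro i
  have := posSemidef_diagonal_iff.mp h2 i
  linarith

include hW1 hW2 in
lemma ginv_one_add {w : n → ℝ} (hw : ∀ i, 0 ≤ w i) :
    (1 + W * diagonal w * star W)⁻¹ = W * diagonal (fun i => (1 + w i)⁻¹) * star W := by
  apply Matrix.inv_eq_right_inv
  have h1 : (1 : Matrix n n ℝ) + W * diagonal w * star W
      = W * diagonal (fun i => 1 + w i) * star W := by
    conv_lhs => rw [show (1 : Matrix n n ℝ) = (1:ℝ) • (1 : Matrix n n ℝ) from (one_smul _ _).symm,
      gsmul_one_repr hW1]
    rw [gconj_add]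
  rw [h1, gconj_mul hW2]
  have h2 : (fun i => (1 + w i) * (1 + w i)⁻¹) = fun _ => (1:ℝ) :=
    funext fun i => mul_inv_cancel₀ (by have := hw i; positivity)
  rw [h2, gconj_one hW1]

include hW1 hW2 in
lemma ghfun_repr {w : n → ℝ} (hw : ∀ i, 0 ≤ w i) :
    (1 : Matrix n n ℝ) - (1 + W * diagonal w * star W)⁻¹
      = W * diagonal (fun i => 1 - (1 + w i)⁻¹) * star W := by
  have h1 : (1 : Matrix n n ℝ) - (1 + W * diagonal w * star W)⁻¹
      = W * diagonal (fun _ => (1:ℝ)) * star W - W * diagonal (fun i => (1 + w i)⁻¹) * star W := by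
    rw [gconj_one hW1, ← ginv_one_add hW1 hW2 hw]
  rw [h1, gconj_sub]

end gen

lemma psd_repr {C : Matrix n n ℝ} (hC : C.PosSemidef) :
    ∃ (W : Matrix n n ℝ) (w : n → ℝ), W * star W = 1 ∧ star W * W = 1 ∧ (∀ i, 0 ≤ w i) ∧
      C = W * diagonal w * star W :=
  ⟨_, _, V_mul_starV hC.1, starV_mul_V hC.1, fun i => hC.eigenvalues_nonneg i,
    spectral_real hC.1⟩

lemma F_low {C : Matrix n n ℝ} (hC : C.PosSemidef) {t : ℝ}
    (h : (t • (1 : Matrix n n ℝ) - (1 + C)).PosSemidef) :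
    (t • ((1 : Matrix n n ℝ) - (1 + C)⁻¹) - C).PosSemidef := by
  obtain ⟨W, w, hW1, hW2, hw, rfl⟩ := psd_repr hC
  have h' : ((t - 1) • (1 : Matrix n n ℝ) - W * diagonal w * star W).PosSemidef := by
    rw [sub_smul, one_smul, sub_sub]; exact h
  have heb := geig_le hW1 hW2 h'
  have main : t • ((1 : Matrix n n ℝ) - (1 + W * diagonal w * star W)⁻¹) - W * diagonal w * star W
      = W * diagonal (fun i => t * (1 - (1 + w i)⁻¹) - w i) * star W := by
    rw [ghfun_repr hW1 hW2 hw, gconj_smul, gconj_sub]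
  rw [main]
  refine gconj_psd _ (fun i => ?_)
  have hx0 := hw i
  have hxt := heb i
  have hx : (0:ℝ) < 1 + w i := by linarith
  have hrepr : 1 - (1 + w i)⁻¹ = w i / (1 + w i) := by field_simp; ring
  rw [hrepr, sub_nonneg, mul_div_assoc', le_div_iff₀ hx]
  nlinarith

lemma F_up {C : Matrix n n ℝ} (hC : C.PosSemidef) {r : ℝ}
    (h : ((1 + C) - r • (1 : Matrix n n ℝ)).PosSemidef) :
    (C - r • ((1 : Matrix n n ℝ) - (1 + C)⁻¹)).PosSemidef := by
  obtain ⟨W, w, hW1, hW2, hw, rfl⟩ := psd_repr hC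
  have h' : (W * diagonal w * star W - (r - 1) • (1 : Matrix n n ℝ)).PosSemidef := by
    have hcc : W * diagonal w * star W - (r - 1) • (1 : Matrix n n ℝ)
        = (1 + W * diagonal w * star W) - r • (1 : Matrix n n ℝ) := by
      rw [sub_smul, one_smul]; abel
    rw [hcc]; exact h
  have heb := geig_ge hW1 hW2 h'
  have main : W * diagonal w * star W
        - r • ((1 : Matrix n n ℝ) - (1 + W * diagonal w * star W)⁻¹)
      = W * diagonal (fun i => w i - r * (1 - (1 + w i)⁻¹)) * star W := by
    rw [ghfun_repr hW1 hW2 hw, gconj_smul, gconj_sub]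
  rw [main]
  refine gconj_psd _ (fun i => ?_)
  have hx0 := hw i
  have hxr := heb i
  have hx : (0:ℝ) < 1 + w i := by linarith
  have hrepr : 1 - (1 + w i)⁻¹ = w i / (1 + w i) := by field_simp; ring
  rw [hrepr, sub_nonneg, mul_div_assoc', div_le_iff₀ hx]
  nlinarith

lemma hfun_psd {C : Matrix n n ℝ} (hC : C.PosSemidef) :
    ((1 : Matrix n n ℝ) - (1 + C)⁻¹).PosSemidef := by
  obtain ⟨W, w, hW1, hW2, hw, rfl⟩ := psd_repr hC
  rw [ghfun_repr hW1 hW2 hw]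
  refine gconj_psd _ (fun i => ?_)
  have h0 := hw i
  have h1 : (1 + w i)⁻¹ ≤ 1 := by
    rw [inv_le_one_iff₀]
    right; linarith
  linarith

end SubmodAux

open SubmodAux

theorem submodularity_ratio_lower_bound {T : Type*} [Fintype T] [DecidableEq T]
    [Nonempty T] {d : ℕ}
    (L : Matrix (Fin d) (Fin d) ℝ) (hL : L.PosSemidef)
    (K : Finset T → Matrix (Fin d) (Fin d) ℝ)
    (hpsd : ∀ ω : T, (K {ω}).PosSemidef)
    (hadd : ∀ 𝒮 : Finset T, K 𝒮 = ∑ ω ∈ 𝒮, K {ω})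
    (hmax : 0 < ⨆ ω : T, (L * K {ω}).trace)
    (hHω : ∀ ω : T, (1 + K {ω}).IsHermitian)
    (hHuniv : (1 + K (Finset.univ : Finset T)).IsHermitian)
    (f : Finset T → ℝ)
    (hf : ∀ 𝒮, f 𝒮 = (L * (1 + K (∅ : Finset T))⁻¹).trace - (L * (1 + K 𝒮)⁻¹).trace)
    (γ : ℝ)
    (hγ : γ = (⨅ ω : T, (L * K {ω}).trace) *
          (⨅ ω : T, ⨅ i, (hHω ω).eigenvalues i) ^ 2 /
        ((⨆ ω : T, (L * K {ω}).trace) * (⨆ i, hHuniv.eigenvalues i) ^ 2)) :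
    ∀ Ω 𝒮 : Finset T,
      ∑ ω ∈ Ω \ 𝒮, (f (insert ω 𝒮) - f 𝒮) ≥ γ * (f (𝒮 ∪ Ω) - f 𝒮) := by
  intro Ω S
  -- trivial case: Ω \ S = ∅
  rcases Finset.eq_empty_or_nonempty (Ω \ S) with hRe | hRne
  · have hsub : Ω ⊆ S := Finset.sdiff_eq_empty_iff_subset.mp hRe
    have hUn : S ∪ Ω = S := Finset.union_eq_left.mpr hsub
    rw [hRe, hUn, Finset.sum_empty]
    simp
  -- degenerate dimension
  rcases Nat.eq_zero_or_pos d with hd0 | hd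
  · exfalso
    subst hd0
    have hz : ∀ ω : T, (L * K {ω}).trace = 0 := by
      intro ω
      rw [Matrix.trace]
      simp
    rw [show (fun ω : T => (L * K {ω}).trace) = fun _ => (0:ℝ) from funext hz] at hmax
    rw [ciSup_const] at hmax
    exact lt_irrefl 0 hmax
  haveI : Nonempty (Fin d) := ⟨⟨0, hd⟩⟩
  -- scalar quantities
  set α : ℝ := ⨅ ω : T, (L * K {ω}).trace with hαdef
  set β : ℝ := ⨆ ω : T, (L * K {ω}).trace with hβdef
  set m : ℝ := ⨅ ω : T, ⨅ i, (hHω ω).eigenvalues i with hmdef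
  set Λ : ℝ := ⨆ i, hHuniv.eigenvalues i with hΛdef
  have htr0 : ∀ ω : T, 0 ≤ (L * K {ω}).trace := fun ω => trace_mul_psd_nonneg hL (hpsd ω)
  have hβub : ∀ ω : T, (L * K {ω}).trace ≤ β := by
    intro ω; rw [hβdef]
    exact le_ciSup (f := fun ω : T => (L * K {ω}).trace) (Set.Finite.bddAbove (Set.finite_range _)) ω
  have hαlb : ∀ ω : T, α ≤ (L * K {ω}).trace := by
    intro ω; rw [hαdef]
    exact ciInf_le (f := fun ω : T => (L * K {ω}).trace) (Set.Finite.bddBelow (Set.finite_range _)) ω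
  have hα0 : 0 ≤ α := by rw [hαdef]; exact le_ciInf htr0
  have hβ0 : 0 < β := hmax
  have hαβ : α ≤ β := (hαlb (Classical.arbitrary T)).trans (hβub _)
  -- eigenvalue bounds
  have hKpsd : ∀ X : Finset T, (K X).PosSemidef := fun X => by
    rw [hadd X]; exact psd_sum (fun ω _ => hpsd ω)
  have h1e : ∀ (ω : T) (i : Fin d), 1 ≤ (hHω ω).eigenvalues i := by
    intro ω
    apply eig_ge (hHω ω)
    have : (1 : Matrix (Fin d) (Fin d) ℝ) + K {ω} - (1:ℝ) • 1 = K {ω} := by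
      rw [one_smul]; abel
    rw [this]
    exact hpsd ω
  have hm1 : 1 ≤ m := by
    rw [hmdef]; exact le_ciInf (fun ω => le_ciInf (h1e ω))
  have hm0 : (0:ℝ) < m := lt_of_lt_of_le one_pos hm1
  have hmle : ∀ (ω : T) (i : Fin d), m ≤ (hHω ω).eigenvalues i := by
    intro ω i; rw [hmdef]
    exact le_trans (ciInf_le (Set.Finite.bddBelow (Set.finite_range _)) ω)
      (ciInf_le (Set.Finite.bddBelow (Set.finite_range _)) i)
  have hΛub : ∀ i, hHuniv.eigenvalues i ≤ Λ := by
    intro i; rw [hΛdef]; exact le_ciSup (Set.Finite.bddAbove (Set.finite_range _)) i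
  have h1u : ∀ i, 1 ≤ hHuniv.eigenvalues i := by
    apply eig_ge hHuniv
    have : (1 : Matrix (Fin d) (Fin d) ℝ) + K Finset.univ - (1:ℝ) • 1 = K Finset.univ := by
      rw [one_smul]; abel
    rw [this]
    exact hKpsd _
  have hΛ1 : 1 ≤ Λ := le_trans (h1u (Classical.arbitrary (Fin d))) (hΛub _)
  have hΛ0 : (0:ℝ) < Λ := lt_of_lt_of_le one_pos hΛ1
  have hMub : ((Λ:ℝ) • (1 : Matrix (Fin d) (Fin d) ℝ) - (1 + K Finset.univ)).PosSemidef :=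
    psd_of_eig_le hHuniv hΛub
  have hωlb : ∀ ω : T, ((1 + K {ω}) - (m:ℝ) • (1 : Matrix (Fin d) (Fin d) ℝ)).PosSemidef :=
    fun ω => psd_of_eig_ge (hHω ω) (hmle ω)
  have hmΛ : m ≤ Λ := by
    set ω := Classical.arbitrary T
    have hsub : (Λ:ℝ) • (1 : Matrix (Fin d) (Fin d) ℝ) - (1 + K {ω})
        = ((Λ:ℝ) • (1 : Matrix (Fin d) (Fin d) ℝ) - (1 + K Finset.univ))
          + ∑ x ∈ Finset.univ \ {ω}, K {x} := by
      have h2 : (∑ x ∈ Finset.univ \ {ω}, K {x}) + ∑ x ∈ {ω}, K {x}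
          = ∑ x ∈ (Finset.univ : Finset T), K {x} :=
        Finset.sum_sdiff (Finset.subset_univ _)
      have h3 : K Finset.univ = (∑ x ∈ Finset.univ \ {ω}, K {x}) + K {ω} := by
        rw [hadd]
        rw [← h2, Finset.sum_singleton]
      rw [h3]; abel
    have hp : ((Λ:ℝ) • (1 : Matrix (Fin d) (Fin d) ℝ) - (1 + K {ω})).PosSemidef := by
      rw [hsub]
      exact hMub.add (psd_sum (fun x _ => hpsd x))
    have := eig_le (hHω ω) hp (Classical.arbitrary (Fin d))
    exact le_trans (hmle ω _) this
  have hγ0 : 0 ≤ γ := by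
    rw [hγ]
    apply div_nonneg
    · exact mul_nonneg hα0 (sq_nonneg _)
    · exact mul_nonneg hβ0.le (sq_nonneg _)
  -- the base matrix A and its square root
  set A : Matrix (Fin d) (Fin d) ℝ := 1 + K S with hAdef
  have hApd : A.PosDef := Matrix.PosDef.one.add_posSemidef (hKpsd S)
  open scoped MatrixOrder in set s : Matrix (Fin d) (Fin d) ℝ := CFC.sqrt A with hsdef
  open scoped MatrixOrder in have hs_psd : s.PosSemidef := (CFC.sqrt_nonneg _).posSemidef
  open scoped MatrixOrder in have hss : s * s = A := CFC.sqrt_mul_sqrt_self _ hApd.posSemidef.nonneg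
  have hsdet : IsUnit s.det := by
    have h2 : s.det * s.det = A.det := by rw [← Matrix.det_mul, hss]
    have h3 := hApd.det_pos
    refine isUnit_iff_ne_zero.mpr (fun h => ?_)
    rw [h, mul_zero] at h2
    rw [← h2] at h3
    exact lt_irrefl 0 h3
  have hs1 : s * s⁻¹ = 1 := Matrix.mul_nonsing_inv _ hsdet
  have hs1' : s⁻¹ * s = 1 := Matrix.nonsing_inv_mul _ hsdet
  have hsiH : (s⁻¹).IsHermitian := by
    rw [Matrix.IsHermitian, Matrix.conjTranspose_nonsing_inv, hs_psd.1.eq]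
  have hAinv : A⁻¹ = s⁻¹ * s⁻¹ := by rw [← hss, Matrix.mul_inv_rev]
  -- conjugation helpers
  have hconj : ∀ X : Matrix (Fin d) (Fin d) ℝ, X.PosSemidef → (s⁻¹ * X * s⁻¹).PosSemidef := by
    intro X hX
    have := hX.mul_mul_conjTranspose_same s⁻¹
    rwa [hsiH.eq] at this
  have hconjsub : ∀ X Y : Matrix (Fin d) (Fin d) ℝ,
      (X - Y).PosSemidef → (s⁻¹ * X * s⁻¹ - s⁻¹ * Y * s⁻¹).PosSemidef := by
    intro X Y h
    have h2 := hconj _ h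
    rw [mul_sub, sub_mul] at h2
    exact h2
  have hid1 : ∀ N : Matrix (Fin d) (Fin d) ℝ, s * (s⁻¹ * N * s⁻¹) * s = N := by
    intro N
    calc s * (s⁻¹ * N * s⁻¹) * s = (s * s⁻¹) * N * (s⁻¹ * s) := by
          simp only [Matrix.mul_assoc]
      _ = N := by rw [hs1, hs1', one_mul, mul_one]
  have hids : ∀ N : Matrix (Fin d) (Fin d) ℝ, s⁻¹ * (s * N * s) * s⁻¹ = N := by
    intro N
    calc s⁻¹ * (s * N * s) * s⁻¹ = (s⁻¹ * s) * N * (s * s⁻¹) := by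
          simp only [Matrix.mul_assoc]
      _ = N := by rw [hs1, hs1', one_mul, mul_one]
  have hone : s⁻¹ * A * s⁻¹ = 1 := by
    rw [← hss]
    calc s⁻¹ * (s * s) * s⁻¹ = (s⁻¹ * s) * (s * s⁻¹) := by simp only [Matrix.mul_assoc]
      _ = 1 := by rw [hs1, hs1', one_mul]
  have hrepr : ∀ N : Matrix (Fin d) (Fin d) ℝ, A + N = s * (1 + s⁻¹ * N * s⁻¹) * s := by
    intro N
    rw [mul_add, add_mul, mul_one, hss, hid1]
  have hinv : ∀ N : Matrix (Fin d) (Fin d) ℝ,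
      (A + N)⁻¹ = s⁻¹ * (1 + s⁻¹ * N * s⁻¹)⁻¹ * s⁻¹ := by
    intro N
    rw [hrepr N, Matrix.mul_inv_rev, Matrix.mul_inv_rev, ← Matrix.mul_assoc]
  have hdiff : ∀ N : Matrix (Fin d) (Fin d) ℝ,
      A⁻¹ - (A + N)⁻¹ = s⁻¹ * (1 - (1 + s⁻¹ * N * s⁻¹)⁻¹) * s⁻¹ := by
    intro N
    rw [hinv N, hAinv, mul_sub, sub_mul, mul_one]
  -- combinatorial facts
  obtain ⟨ω₀, hω₀⟩ := hRne
  have hω₀Ω : ω₀ ∈ Ω \ S := hω₀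
  have hω₀S : ω₀ ∉ S := (Finset.mem_sdiff.mp hω₀).2
  set Kp : Matrix (Fin d) (Fin d) ℝ := ∑ ω ∈ Ω \ S, K {ω} with hKpdef
  have hKppsd : Kp.PosSemidef := psd_sum (fun ω _ => hpsd ω)
  have hKSO : (1 : Matrix (Fin d) (Fin d) ℝ) + K (S ∪ Ω) = A + Kp := by
    have h1 : K (S ∪ Ω) = K S + Kp := by
      rw [hadd (S ∪ Ω), ← Finset.union_sdiff_self_eq_union,
        Finset.sum_union Finset.disjoint_sdiff, ← hadd S]
    rw [h1, hAdef]
    abel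
  have hBins : ∀ ω ∈ Ω \ S, (1 : Matrix (Fin d) (Fin d) ℝ) + K (insert ω S) = A + K {ω} := by
    intro ω hω
    have hωS : ω ∉ S := (Finset.mem_sdiff.mp hω).2
    have h1 : K (insert ω S) = K {ω} + K S := by
      rw [hadd (insert ω S), Finset.sum_insert hωS, ← hadd S]
    rw [h1, hAdef]
    abel
  -- case-dependent parameters p, q
  obtain ⟨p, q, hp0, hq0, hAq, hAp, hfin⟩ :
      ∃ p q : ℝ, 0 < p ∧ 0 < q ∧ (A - q • (1 : Matrix (Fin d) (Fin d) ℝ)).PosSemidef ∧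
        (p • (1 : Matrix (Fin d) (Fin d) ℝ) - A).PosSemidef ∧ (Λ / q) * γ ≤ m / p := by
    by_cases hS : S = ∅
    · refine ⟨1, 1, one_pos, one_pos, ?_, ?_, ?_⟩
      · have : A - (1:ℝ) • (1 : Matrix (Fin d) (Fin d) ℝ) = K S := by
          rw [one_smul, hAdef]; abel
        rw [this]; exact hKpsd S
      · have hK0 : K S = 0 := by rw [hS, hadd]; simp
        have : (1:ℝ) • (1 : Matrix (Fin d) (Fin d) ℝ) - A = 0 := by
          rw [one_smul, hAdef, hK0]; abel
        rw [this]; exact Matrix.PosSemidef.zero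
      · rw [hγ, div_one, div_one]
        have hkey : α * m ≤ β * Λ :=
          mul_le_mul hαβ hmΛ hm0.le hβ0.le
        have h2 : Λ * (α * m ^ 2 / (β * Λ ^ 2)) = (α * m) * m / (β * Λ) := by
          field_simp
        rw [h2, div_le_iff₀ (by positivity)]
        calc (α * m) * m ≤ (β * Λ) * m := mul_le_mul_of_nonneg_right hkey hm0.le
          _ = m * (β * Λ) := by ring
    · obtain ⟨ω₁, hω₁⟩ := Finset.nonempty_iff_ne_empty.mpr hS
      refine ⟨Λ, m, hΛ0, hm0, ?_, ?_, ?_⟩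
      · have h3 : K S = K {ω₁} + ∑ x ∈ S.erase ω₁, K {x} := by
          rw [hadd S, ← Finset.add_sum_erase _ _ hω₁]
        have h4 : A - (m:ℝ) • (1 : Matrix (Fin d) (Fin d) ℝ)
            = ((1 + K {ω₁}) - (m:ℝ) • 1) + ∑ x ∈ S.erase ω₁, K {x} := by
          rw [hAdef, h3]; abel
        rw [h4]
        exact (hωlb ω₁).add (psd_sum (fun x _ => hpsd x))
      · have h2 : (∑ x ∈ Finset.univ \ S, K {x}) + ∑ x ∈ S, K {x}
            = ∑ x ∈ (Finset.univ : Finset T), K {x} :=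
          Finset.sum_sdiff (Finset.subset_univ _)
        have h3 : K Finset.univ = (∑ x ∈ Finset.univ \ S, K {x}) + K S := by
          rw [hadd Finset.univ, ← h2, ← hadd S]
        have h4 : (Λ:ℝ) • (1 : Matrix (Fin d) (Fin d) ℝ) - A
            = ((Λ:ℝ) • (1 : Matrix (Fin d) (Fin d) ℝ) - (1 + K Finset.univ))
              + ∑ x ∈ Finset.univ \ S, K {x} := by
          rw [hAdef, h3]; abel
        rw [h4]
        exact hMub.add (psd_sum (fun x _ => hpsd x))
      · rw [hγ]
        have h2 : (Λ / m) * (α * m ^ 2 / (β * Λ ^ 2)) = (α * m) / (β * Λ) := by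
          field_simp
        rw [h2, div_le_div_iff₀ (by positivity) (by positivity)]
        nlinarith [mul_le_mul_of_nonneg_right hαβ (mul_nonneg hm0.le hΛ0.le)]
  -- Loewner bounds
  have hboundω : ∀ ω ∈ Ω \ S,
      ((Λ / q) • (1 : Matrix (Fin d) (Fin d) ℝ) - (1 + s⁻¹ * K {ω} * s⁻¹)).PosSemidef := by
    intro ω hω
    have hωS : ω ∉ S := (Finset.mem_sdiff.mp hω).2
    -- step a : Λ•1 - (A + K{ω}) psd
    have hins : insert ω S ⊆ Finset.univ := Finset.subset_univ _
    have h2 : (∑ x ∈ Finset.univ \ insert ω S, K {x}) + ∑ x ∈ insert ω S, K {x}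
        = ∑ x ∈ (Finset.univ : Finset T), K {x} :=
      Finset.sum_sdiff hins
    have h3 : K Finset.univ = (∑ x ∈ Finset.univ \ insert ω S, K {x}) + (K {ω} + K S) := by
      rw [hadd Finset.univ, ← h2, Finset.sum_insert hωS, ← hadd S]
    have hstepa : ((Λ:ℝ) • (1 : Matrix (Fin d) (Fin d) ℝ) - (A + K {ω})).PosSemidef := by
      have h4 : (Λ:ℝ) • (1 : Matrix (Fin d) (Fin d) ℝ) - (A + K {ω})
          = ((Λ:ℝ) • (1 : Matrix (Fin d) (Fin d) ℝ) - (1 + K Finset.univ))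
            + ∑ x ∈ Finset.univ \ insert ω S, K {x} := by
        rw [hAdef, h3]; abel
      rw [h4]
      exact hMub.add (psd_sum (fun x _ => hpsd x))
    -- step b : conj
    have hstepb : ((Λ:ℝ) • A⁻¹ - (1 + s⁻¹ * K {ω} * s⁻¹)).PosSemidef := by
      have h5 := hconjsub _ _ hstepa
      have h6 : s⁻¹ * ((Λ:ℝ) • (1 : Matrix (Fin d) (Fin d) ℝ)) * s⁻¹ = (Λ:ℝ) • A⁻¹ := by
        rw [mul_smul_comm, Matrix.smul_mul, mul_one, hAinv]
      have h7 : s⁻¹ * (A + K {ω}) * s⁻¹ = 1 + s⁻¹ * K {ω} * s⁻¹ := by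
        rw [mul_add, add_mul, hone]
      rwa [h6, h7] at h5
    -- step c
    have hc1 : (1/q) • (1 : Matrix (Fin d) (Fin d) ℝ) - A⁻¹
        = s⁻¹ * ((1/q) • (A - q • (1 : Matrix (Fin d) (Fin d) ℝ))) * s⁻¹ := by
      have e1 : (1/q) • (A - q • (1 : Matrix (Fin d) (Fin d) ℝ))
          = (1/q) • A - (1 : Matrix (Fin d) (Fin d) ℝ) := by
        rw [smul_sub, smul_smul, one_div, inv_mul_cancel₀ hq0.ne', one_smul]
      rw [e1, mul_sub, sub_mul, mul_smul_comm, Matrix.smul_mul, hone, mul_one, ← hAinv]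
    have hc2 : ((1/q) • (1 : Matrix (Fin d) (Fin d) ℝ) - A⁻¹).PosSemidef := by
      rw [hc1]
      exact hconj _ (psd_smul hAq (by positivity))
    have hstepc : ((Λ / q) • (1 : Matrix (Fin d) (Fin d) ℝ) - (Λ:ℝ) • A⁻¹).PosSemidef := by
      have hc3 : (Λ / q) • (1 : Matrix (Fin d) (Fin d) ℝ) - (Λ:ℝ) • A⁻¹
          = (Λ:ℝ) • ((1/q) • (1 : Matrix (Fin d) (Fin d) ℝ) - A⁻¹) := by
        rw [smul_sub, smul_smul, mul_one_div]
      rw [hc3]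
      exact psd_smul hc2 hΛ0.le
    have hfinal : (Λ / q) • (1 : Matrix (Fin d) (Fin d) ℝ) - (1 + s⁻¹ * K {ω} * s⁻¹)
        = ((Λ / q) • (1 : Matrix (Fin d) (Fin d) ℝ) - (Λ:ℝ) • A⁻¹)
          + ((Λ:ℝ) • A⁻¹ - (1 + s⁻¹ * K {ω} * s⁻¹)) := by abel
    rw [hfinal]
    exact hstepc.add hstepb
  -- Loewner bound for C'
  have hbound' : ((1 + s⁻¹ * Kp * s⁻¹) - (m / p) • (1 : Matrix (Fin d) (Fin d) ℝ)).PosSemidef := by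
    have h3 : Kp = K {ω₀} + ∑ x ∈ (Ω \ S).erase ω₀, K {x} := by
      rw [hKpdef, ← Finset.add_sum_erase _ _ hω₀]
    have hstepa : ((A + Kp) - (m:ℝ) • (1 : Matrix (Fin d) (Fin d) ℝ)).PosSemidef := by
      have h4 : (A + Kp) - (m:ℝ) • (1 : Matrix (Fin d) (Fin d) ℝ)
          = ((1 + K {ω₀}) - (m:ℝ) • 1) + (K S + ∑ x ∈ (Ω \ S).erase ω₀, K {x}) := by
        rw [hAdef, h3]; abel
      rw [h4]
      exact (hωlb ω₀).add ((hKpsd S).add (psd_sum (fun x _ => hpsd x)))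
    have hstepb : ((1 + s⁻¹ * Kp * s⁻¹) - (m:ℝ) • A⁻¹).PosSemidef := by
      have h5 := hconjsub _ _ hstepa
      have h6 : s⁻¹ * ((m:ℝ) • (1 : Matrix (Fin d) (Fin d) ℝ)) * s⁻¹ = (m:ℝ) • A⁻¹ := by
        rw [mul_smul_comm, Matrix.smul_mul, mul_one, hAinv]
      have h7 : s⁻¹ * (A + Kp) * s⁻¹ = 1 + s⁻¹ * Kp * s⁻¹ := by
        rw [mul_add, add_mul, hone]
      rwa [h6, h7] at h5
    have hc1 : A⁻¹ - (1/p) • (1 : Matrix (Fin d) (Fin d) ℝ)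
        = s⁻¹ * ((1/p) • (p • (1 : Matrix (Fin d) (Fin d) ℝ) - A)) * s⁻¹ := by
      have e1 : (1/p) • (p • (1 : Matrix (Fin d) (Fin d) ℝ) - A)
          = (1 : Matrix (Fin d) (Fin d) ℝ) - (1/p) • A := by
        rw [smul_sub, smul_smul, one_div, inv_mul_cancel₀ hp0.ne', one_smul]
      rw [e1, mul_sub, sub_mul, mul_smul_comm, Matrix.smul_mul, hone, mul_one, ← hAinv]
    have hc2 : (A⁻¹ - (1/p) • (1 : Matrix (Fin d) (Fin d) ℝ)).PosSemidef := by
      rw [hc1]; exact hconj _ (psd_smul hAp (by positivity))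
    have hstepc : ((m:ℝ) • A⁻¹ - (m/p) • (1 : Matrix (Fin d) (Fin d) ℝ)).PosSemidef := by
      have hc3 : (m:ℝ) • A⁻¹ - (m/p) • (1 : Matrix (Fin d) (Fin d) ℝ)
          = (m:ℝ) • (A⁻¹ - (1/p) • (1 : Matrix (Fin d) (Fin d) ℝ)) := by
        rw [smul_sub, smul_smul, mul_one_div]
      rw [hc3]; exact psd_smul hc2 hm0.le
    have hfinal : (1 + s⁻¹ * Kp * s⁻¹) - (m/p) • (1 : Matrix (Fin d) (Fin d) ℝ)
        = ((1 + s⁻¹ * Kp * s⁻¹) - (m:ℝ) • A⁻¹)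
          + ((m:ℝ) • A⁻¹ - (m/p) • (1 : Matrix (Fin d) (Fin d) ℝ)) := by abel
    rw [hfinal]; exact hstepb.add hstepc
  -- F lemmas
  have hCωpsd : ∀ ω : T, (s⁻¹ * K {ω} * s⁻¹).PosSemidef := fun ω => hconj _ (hpsd ω)
  have hC'psd : (s⁻¹ * Kp * s⁻¹).PosSemidef := hconj _ hKppsd
  have hFlow : ∀ ω ∈ Ω \ S,
      ((Λ/q) • ((1 : Matrix (Fin d) (Fin d) ℝ) - (1 + s⁻¹ * K {ω} * s⁻¹)⁻¹)
        - s⁻¹ * K {ω} * s⁻¹).PosSemidef :=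
    fun ω hω => F_low (hCωpsd ω) (hboundω ω hω)
  have hFup : ((s⁻¹ * Kp * s⁻¹)
      - (m/p) • ((1 : Matrix (Fin d) (Fin d) ℝ) - (1 + s⁻¹ * Kp * s⁻¹)⁻¹)).PosSemidef :=
    F_up hC'psd hbound'
  -- trace chain
  have hτ'sum : (L * (s⁻¹ * (s⁻¹ * Kp * s⁻¹) * s⁻¹)).trace
      = ∑ ω ∈ Ω \ S, (L * (s⁻¹ * (s⁻¹ * K {ω} * s⁻¹) * s⁻¹)).trace := by
    rw [hKpdef]
    simp only [Matrix.mul_sum, Matrix.sum_mul, Matrix.trace_sum]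
  have hperω : ∀ ω ∈ Ω \ S, (L * (s⁻¹ * (s⁻¹ * K {ω} * s⁻¹) * s⁻¹)).trace
      ≤ (Λ/q) * (L * (s⁻¹ * ((1 : Matrix (Fin d) (Fin d) ℝ)
          - (1 + s⁻¹ * K {ω} * s⁻¹)⁻¹) * s⁻¹)).trace := by
    intro ω hω
    have h1 := hconjsub _ _ (hFlow ω hω)
    have h2 := trace_mul_mono hL h1
    have h3 : s⁻¹ * ((Λ/q) • ((1 : Matrix (Fin d) (Fin d) ℝ)
          - (1 + s⁻¹ * K {ω} * s⁻¹)⁻¹)) * s⁻¹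
        = (Λ/q) • (s⁻¹ * ((1 : Matrix (Fin d) (Fin d) ℝ)
          - (1 + s⁻¹ * K {ω} * s⁻¹)⁻¹) * s⁻¹) := by
      rw [mul_smul_comm, Matrix.smul_mul]
    rw [h3, mul_smul_comm, trace_smul, smul_eq_mul] at h2
    exact h2
  have hupper : (m/p) * (L * (s⁻¹ * ((1 : Matrix (Fin d) (Fin d) ℝ)
        - (1 + s⁻¹ * Kp * s⁻¹)⁻¹) * s⁻¹)).trace
      ≤ (L * (s⁻¹ * (s⁻¹ * Kp * s⁻¹) * s⁻¹)).trace := by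
    have h1 := hconjsub _ _ hFup
    have h2 := trace_mul_mono hL h1
    have h3 : s⁻¹ * ((m/p) • ((1 : Matrix (Fin d) (Fin d) ℝ)
          - (1 + s⁻¹ * Kp * s⁻¹)⁻¹)) * s⁻¹
        = (m/p) • (s⁻¹ * ((1 : Matrix (Fin d) (Fin d) ℝ)
          - (1 + s⁻¹ * Kp * s⁻¹)⁻¹) * s⁻¹) := by
      rw [mul_smul_comm, Matrix.smul_mul]
    rw [h3, mul_smul_comm, trace_smul, smul_eq_mul] at h2
    exact h2
  have hRHS0 : 0 ≤ (L * (s⁻¹ * ((1 : Matrix (Fin d) (Fin d) ℝ)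
      - (1 + s⁻¹ * Kp * s⁻¹)⁻¹) * s⁻¹)).trace :=
    trace_mul_psd_nonneg hL (hconj _ (hfun_psd hC'psd))
  -- rewriting the goal
  have hROeq : f (S ∪ Ω) - f S = (L * (s⁻¹ * ((1 : Matrix (Fin d) (Fin d) ℝ)
      - (1 + s⁻¹ * Kp * s⁻¹)⁻¹) * s⁻¹)).trace := by
    rw [hf (S ∪ Ω), hf S, hKSO, ← hAdef]
    have e1 : (L * (1 + K ∅)⁻¹).trace - (L * (A + Kp)⁻¹).trace
        - ((L * (1 + K ∅)⁻¹).trace - (L * A⁻¹).trace)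
        = (L * A⁻¹).trace - (L * (A + Kp)⁻¹).trace := by ring
    rw [e1, ← trace_sub, ← mul_sub, hdiff Kp]
  have hLHSeq : ∀ ω ∈ Ω \ S, f (insert ω S) - f S
      = (L * (s⁻¹ * ((1 : Matrix (Fin d) (Fin d) ℝ)
        - (1 + s⁻¹ * K {ω} * s⁻¹)⁻¹) * s⁻¹)).trace := by
    intro ω hω
    rw [hf (insert ω S), hf S, hBins ω hω, ← hAdef]
    have e1 : (L * (1 + K ∅)⁻¹).trace - (L * (A + K {ω})⁻¹).trace
        - ((L * (1 + K ∅)⁻¹).trace - (L * A⁻¹).trace)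
        = (L * A⁻¹).trace - (L * (A + K {ω})⁻¹).trace := by ring
    rw [e1, ← trace_sub, ← mul_sub, hdiff (K {ω})]
  rw [Finset.sum_congr rfl hLHSeq, hROeq]
  have ht0 : (0:ℝ) < Λ/q := by positivity
  have c2 : (L * (s⁻¹ * (s⁻¹ * Kp * s⁻¹) * s⁻¹)).trace
      ≤ (Λ/q) * ∑ ω ∈ Ω \ S, (L * (s⁻¹ * ((1 : Matrix (Fin d) (Fin d) ℝ)
          - (1 + s⁻¹ * K {ω} * s⁻¹)⁻¹) * s⁻¹)).trace := by
    rw [hτ'sum, Finset.mul_sum]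
    exact Finset.sum_le_sum hperω
  have c1 : (Λ/q) * (γ * (L * (s⁻¹ * ((1 : Matrix (Fin d) (Fin d) ℝ)
        - (1 + s⁻¹ * Kp * s⁻¹)⁻¹) * s⁻¹)).trace)
      ≤ (Λ/q) * ∑ ω ∈ Ω \ S, (L * (s⁻¹ * ((1 : Matrix (Fin d) (Fin d) ℝ)
          - (1 + s⁻¹ * K {ω} * s⁻¹)⁻¹) * s⁻¹)).trace := by
    calc (Λ/q) * (γ * (L * (s⁻¹ * ((1 : Matrix (Fin d) (Fin d) ℝ)
            - (1 + s⁻¹ * Kp * s⁻¹)⁻¹) * s⁻¹)).trace)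
        = ((Λ/q) * γ) * (L * (s⁻¹ * ((1 : Matrix (Fin d) (Fin d) ℝ)
            - (1 + s⁻¹ * Kp * s⁻¹)⁻¹) * s⁻¹)).trace := by ring
      _ ≤ (m/p) * (L * (s⁻¹ * ((1 : Matrix (Fin d) (Fin d) ℝ)
            - (1 + s⁻¹ * Kp * s⁻¹)⁻¹) * s⁻¹)).trace :=
          mul_le_mul_of_nonneg_right hfin hRHS0
      _ ≤ (L * (s⁻¹ * (s⁻¹ * Kp * s⁻¹) * s⁻¹)).trace := hupper
      _ ≤ _ := c2
  exact ge_iff_le.mpr (le_of_mul_le_mul_left c1 ht0)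
end
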